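/- arXiv:2007.12338 — 2 statements merged into one kernel-verified Lean document; each statement's English description precedes it below -/
import Mathlib

section
/- Let Λ be an n×n doubly stochastic matrix and 𝐅 = (F₁,…,Fₙ) an n-tuple of Borel probability measures on ℝ with finite first moments. Then (Λ𝐅)ᵢ ≺_cx Fᵢ for every i if and only if Λ𝐅 = 𝐅 (componentwise equality of measures). -/
open MeasureTheory
open scoped ENNReal BigOperators

noncomputable section

/-- The `f`-aggregation set: laws of `f (X₁,…,Xₙ)` over all couplings with marginals `F`. -/
def aggSetF (n : ℕ) (f : (Fin n → ℝ) → ℝ) (F : Fin n → Measure ℝ) : Set (Measure ℝ) :=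
  {H | ∃ μ : Measure (Fin n → ℝ), IsProbabilityMeasure μ ∧
    (∀ i, μ.map (fun x => x i) = F i) ∧ H = μ.map f}

/-- The aggregation set for sums. -/
def aggSet (n : ℕ) (F : Fin n → Measure ℝ) : Set (Measure ℝ) :=
  aggSetF n (fun x => ∑ i, x i) F

/-- A symmetric function on `ℝⁿ`. -/
def IsSymmetricFn (n : ℕ) (f : (Fin n → ℝ) → ℝ) : Prop :=
  ∀ (π : Equiv.Perm (Fin n)) (x : Fin n → ℝ), f (x ∘ π) = f x

/-- Left-continuous quantile function of a measure on ℝ. -/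
def quantile (F : Measure ℝ) (p : ℝ) : ℝ :=
  sInf {x : ℝ | p ≤ (F (Set.Iic x)).toReal}

/-- The uniform probability measure on (0,1). -/
def uniform01 : Measure ℝ := volume.restrict (Set.Ioo (0 : ℝ) 1)

/-- Comonotonic sum F₁ ⊕ ⋯ ⊕ Fₙ : the law of ∑ Fᵢ⁻¹(U), U uniform on (0,1). -/
def comonoSum (n : ℕ) (F : Fin n → Measure ℝ) : Measure ℝ :=
  uniform01.map (fun u => ∑ i, quantile (F i) u)

/-- Convex order F ≺cx G. -/
def ConvexOrder (F G : Measure ℝ) : Prop :=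
  ∀ φ : ℝ → ℝ, ConvexOn ℝ Set.univ φ → Integrable φ F → Integrable φ G →
    ∫ x, φ x ∂F ≤ ∫ x, φ x ∂G

/-- Stochastic order F ≺st G, i.e. F((-∞,x]) ≥ G((-∞,x]) for all x. -/
def StOrder (F G : Measure ℝ) : Prop :=
  ∀ x : ℝ, G (Set.Iic x) ≤ F (Set.Iic x)

/-- Doubly stochastic matrix. -/
def DoublyStochastic {n : ℕ} (Λ : Matrix (Fin n) (Fin n) ℝ) : Prop :=
  (∀ i j, 0 ≤ Λ i j) ∧ (∀ i, ∑ j, Λ i j = 1) ∧ (∀ j, ∑ i, Λ i j = 1)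

/-- Distribution mixture Λ𝐅 : i-th component is ∑ⱼ Λᵢⱼ Fⱼ. -/
def distMix {n : ℕ} (Λ : Matrix (Fin n) (Fin n) ℝ) (F : Fin n → Measure ℝ) :
    Fin n → Measure ℝ :=
  fun i => ∑ j, ENNReal.ofReal (Λ i j) • F j

/-- Quantile mixture Λ⊗𝐅 : i-th component is the law of ∑ⱼ Λᵢⱼ Fⱼ⁻¹(U). -/
def quantileMix {n : ℕ} (Λ : Matrix (Fin n) (Fin n) ℝ) (F : Fin n → Measure ℝ) :
    Fin n → Measure ℝ :=
  fun i => uniform01.map (fun u => ∑ j, Λ i j * quantile (F j) u)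

/-- Worst-case value of a risk measure over the aggregation set, valued in EReal. -/
def worstCase (ρ : Measure ℝ → ℝ) (n : ℕ) (F : Fin n → Measure ℝ) : EReal :=
  sSup ((fun H => ((ρ H : ℝ) : EReal)) '' aggSet n F)

/-- Worst-case Value-at-Risk over the aggregation set, valued in EReal. -/
def worstVaR (p : ℝ) (n : ℕ) (F : Fin n → Measure ℝ) : EReal :=
  sSup ((fun G => ((quantile G p : ℝ) : EReal)) '' aggSet n F)

/-- The class M_D of distributions with a nonincreasing density on an interval support. -/
def MemMD (F : Measure ℝ) : Prop :=
  ∃ f : ℝ → ℝ, Measurable f ∧ (∀ x, 0 ≤ f x) ∧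
    F = volume.withDensity (fun x => ENNReal.ofReal (f x)) ∧
    ∃ s : Set ℝ, s.OrdConnected ∧ (∀ x, x ∉ s → f x = 0) ∧
      (∀ x ∈ s, ∀ y ∈ s, x ≤ y → f y ≤ f x)

/-- The class M_I of distributions with a nondecreasing density on an interval support. -/
def MemMI (F : Measure ℝ) : Prop :=
  ∃ f : ℝ → ℝ, Measurable f ∧ (∀ x, 0 ≤ f x) ∧
    F = volume.withDensity (fun x => ENNReal.ofReal (f x)) ∧
    ∃ s : Set ℝ, s.OrdConnected ∧ (∀ x, x ∉ s → f x = 0) ∧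
      (∀ x ∈ s, ∀ y ∈ s, x ≤ y → f x ≤ f y)

/-- Pareto(α, θ) distribution, via its Lebesgue density α θ^α x^{-(α+1)} on [θ, ∞). -/
def pareto (α θ : ℝ) : Measure ℝ :=
  volume.withDensity
    (fun x => if θ ≤ x then ENNReal.ofReal (α * θ ^ α / x ^ (α + 1)) else 0)

/-- A monotone risk measure (w.r.t. stochastic order, on probability measures). -/
def MonotoneRisk (ρ : Measure ℝ → ℝ) : Prop :=
  ∀ F G : Measure ℝ, IsProbabilityMeasure F → IsProbabilityMeasure G →
    StOrder F G → ρ F ≤ ρ G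

/-- A risk measure consistent with convex order (on finite-mean probability measures). -/
def CxConsistentRisk (ρ : Measure ℝ → ℝ) : Prop :=
  ∀ F G : Measure ℝ, IsProbabilityMeasure F → IsProbabilityMeasure G →
    Integrable id F → Integrable id G → ConvexOrder F G → ρ F ≤ ρ G

/-- Uniform distribution on [a,b]. -/
def unifOn (a b : ℝ) : Measure ℝ :=
  (ENNReal.ofReal (b - a))⁻¹ • volume.restrict (Set.Icc a b)

/-- Bernoulli distribution with parameter p, as a measure on ℝ. -/
def bern (p : ℝ) : Measure ℝ :=
  ENNReal.ofReal (1 - p) • Measure.dirac (0 : ℝ) + ENNReal.ofReal p • Measure.dirac (1 : ℝ)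

/-- The set C(𝐅) of finite-mean distributions dominated by the comonotonic sum in convex order. -/
def CSet (n : ℕ) (F : Fin n → Measure ℝ) : Set (Measure ℝ) :=
  {G | IsProbabilityMeasure G ∧ Integrable id G ∧ ConvexOrder G (comonoSum n F)}



section Aux
open Set

lemma stopLoss_convex (t : ℝ) : ConvexOn ℝ Set.univ (fun x : ℝ => max (x - t) 0) := by
  have h1 : ConvexOn ℝ (Set.univ : Set ℝ) (fun x : ℝ => x - t) :=
    (convexOn_id convex_univ).sub (concaveOn_const t convex_univ)
  exact h1.sup (convexOn_const 0 convex_univ)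

lemma stopLoss_integrable {μ : Measure ℝ} (hμ : Integrable id μ)
    [IsFiniteMeasure μ] (t : ℝ) : Integrable (fun x : ℝ => max (x - t) 0) μ := by
  have : Integrable (fun x : ℝ => x - t) μ := hμ.sub (integrable_const t)
  exact this.pos_part

lemma tail_measurable (μ : Measure ℝ) : Measurable (fun u : ℝ => μ (Set.Ioi u)) := by
  have : Antitone (fun u : ℝ => μ (Set.Ioi u)) := fun a b hab =>
    measure_mono (Ioi_subset_Ioi hab)
  exact this.measurable

lemma stopLoss_eq_lintegral (μ : Measure ℝ) [IsProbabilityMeasure μ]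
    (hμ : Integrable id μ) (t : ℝ) :
    ENNReal.ofReal (∫ x, max (x - t) 0 ∂μ) = ∫⁻ u in Set.Ioi t, μ (Set.Ioi u) := by
  have hnn : (0 : ℝ → ℝ) ≤ᵐ[μ] fun x => max (x - t) 0 :=
    Filter.Eventually.of_forall fun x => le_max_right _ _
  rw [MeasureTheory.ofReal_integral_eq_lintegral_ofReal (stopLoss_integrable hμ t) hnn]
  rw [lintegral_eq_lintegral_meas_lt μ hnn (stopLoss_integrable hμ t).aemeasurable]
  have hcongr : ∫⁻ s in Set.Ioi (0:ℝ), μ {a : ℝ | s < max (a - t) 0}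
      = ∫⁻ s in Set.Ioi (0:ℝ), μ (Set.Ioi (t + s)) := by
    refine setLIntegral_congr_fun measurableSet_Ioi ?_
    refine fun s hs => ?_
    simp only [Set.mem_Ioi] at hs
    beta_reduce
    congr 1
    ext a
    simp only [Set.mem_setOf_eq, Set.mem_Ioi, lt_max_iff]
    constructor
    · rintro (h | h)
      · linarith
      · linarith
    · intro h; left; linarith
  rw [hcongr]
  have hmap : (volume : Measure ℝ).restrict (Set.Ioi t)
      = Measure.map (fun s => t + s) ((volume : Measure ℝ).restrict (Set.Ioi 0)) := by
    conv_lhs => rw [← map_add_left_eq_self (volume : Measure ℝ) t]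
    rw [Measure.restrict_map (measurable_const_add t) measurableSet_Ioi]
    congr 1
    simp [Set.preimage_const_add_Ioi]
  rw [hmap, lintegral_map (tail_measurable μ) (measurable_const_add t)]

lemma tail_eq_of_stopLoss (μ ν : Measure ℝ) [IsProbabilityMeasure μ] [IsProbabilityMeasure ν]
    (hμ : Integrable id μ) (hν : Integrable id ν)
    (h : ∀ t, ∫ x, max (x - t) 0 ∂μ = ∫ x, max (x - t) 0 ∂ν) :
    ∀ t : ℝ, μ (Set.Ioi t) ≤ ν (Set.Ioi t) := by
  -- H equality
  have hH : ∀ t, ∫⁻ u in Set.Ioi t, μ (Set.Ioi u) = ∫⁻ u in Set.Ioi t, ν (Set.Ioi u) := by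
    intro t
    rw [← stopLoss_eq_lintegral μ hμ t, ← stopLoss_eq_lintegral ν hν t, h t]
  have hHfin : ∀ t, ∫⁻ u in Set.Ioi t, μ (Set.Ioi u) ≠ ⊤ := by
    intro t
    rw [← stopLoss_eq_lintegral μ hμ t]
    exact ENNReal.ofReal_ne_top
  -- D equality
  have hsplit : ∀ (κ : Measure ℝ) (t ε : ℝ), 0 < ε →
      ∫⁻ u in Set.Ioi t, κ (Set.Ioi u)
        = (∫⁻ u in Set.Ioc t (t+ε), κ (Set.Ioi u)) + ∫⁻ u in Set.Ioi (t+ε), κ (Set.Ioi u) := by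
    intro κ t ε hε
    rw [← lintegral_union measurableSet_Ioi Set.Ioc_disjoint_Ioi_same,
      Set.Ioc_union_Ioi_eq_Ioi (by linarith)]
  have hD : ∀ t ε : ℝ, 0 < ε →
      ∫⁻ u in Set.Ioc t (t+ε), μ (Set.Ioi u) = ∫⁻ u in Set.Ioc t (t+ε), ν (Set.Ioi u) := by
    intro t ε hε
    have h1 := hsplit μ t ε hε
    have h2 := hsplit ν t ε hε
    have h3 : (∫⁻ u in Set.Ioc t (t+ε), μ (Set.Ioi u)) + ∫⁻ u in Set.Ioi (t+ε), μ (Set.Ioi u)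
        = (∫⁻ u in Set.Ioc t (t+ε), ν (Set.Ioi u)) + ∫⁻ u in Set.Ioi (t+ε), ν (Set.Ioi u) := by
      rw [← h1, ← h2, hH]
    rw [hH (t+ε)] at h3
    have hfin : ∫⁻ u in Set.Ioi (t+ε), ν (Set.Ioi u) ≠ ⊤ := by
      rw [← hH (t+ε)]; exact hHfin (t+ε)
    rw [add_comm _ (∫⁻ u in Set.Ioi (t+ε), ν (Set.Ioi u)),
      add_comm _ (∫⁻ u in Set.Ioi (t+ε), ν (Set.Ioi u))] at h3
    exact (ENNReal.add_right_inj hfin).mp h3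
  -- bounds
  have hub : ∀ (κ : Measure ℝ) (t ε : ℝ), 0 < ε →
      ∫⁻ u in Set.Ioc t (t+ε), κ (Set.Ioi u) ≤ ENNReal.ofReal ε * κ (Set.Ioi t) := by
    intro κ t ε hε
    calc ∫⁻ u in Set.Ioc t (t+ε), κ (Set.Ioi u)
        ≤ ∫⁻ _ in Set.Ioc t (t+ε), κ (Set.Ioi t) := by
          refine setLIntegral_mono (measurable_const) fun u hu => ?_
          exact measure_mono (Ioi_subset_Ioi hu.1.le)
      _ = κ (Set.Ioi t) * volume (Set.Ioc t (t+ε)) := setLIntegral_const _ _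
      _ = ENNReal.ofReal ε * κ (Set.Ioi t) := by
          rw [Real.volume_Ioc, mul_comm]; congr 1; ring_nf
  have hlb : ∀ (κ : Measure ℝ) (t ε : ℝ), 0 < ε →
      ENNReal.ofReal ε * κ (Set.Ioi (t+ε)) ≤ ∫⁻ u in Set.Ioc t (t+ε), κ (Set.Ioi u) := by
    intro κ t ε hε
    calc ENNReal.ofReal ε * κ (Set.Ioi (t+ε))
        = κ (Set.Ioi (t+ε)) * volume (Set.Ioc t (t+ε)) := by
          rw [Real.volume_Ioc, mul_comm]; congr 1; ring_nf
      _ = ∫⁻ _ in Set.Ioc t (t+ε), κ (Set.Ioi (t+ε)) := (setLIntegral_const _ _).symm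
      _ ≤ ∫⁻ u in Set.Ioc t (t+ε), κ (Set.Ioi u) := by
          refine setLIntegral_mono (tail_measurable κ) fun u hu => ?_
          exact measure_mono (Ioi_subset_Ioi hu.2)
  -- key pointwise bound
  have key : ∀ t ε : ℝ, 0 < ε → μ (Set.Ioi (t+ε)) ≤ ν (Set.Ioi t) := by
    intro t ε hε
    have : ENNReal.ofReal ε * μ (Set.Ioi (t+ε)) ≤ ENNReal.ofReal ε * ν (Set.Ioi t) :=
      (hlb μ t ε hε).trans ((hD t ε hε).le.trans (hub ν t ε hε))
    exact (ENNReal.mul_le_mul_iff_right (by simp [hε]) ENNReal.ofReal_ne_top).mp this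
  -- pass to limit via monotone union
  intro t
  have hunion : Set.Ioi t = ⋃ n : ℕ, Set.Ioi (t + 1/(n+1)) := by
    ext x
    simp only [Set.mem_Ioi, Set.mem_iUnion]
    constructor
    · intro hx
      obtain ⟨n, hn⟩ := exists_nat_one_div_lt (sub_pos.mpr hx)
      exact ⟨n, by linarith⟩
    · rintro ⟨n, hn⟩
      have : (0:ℝ) < 1/(n+1) := by positivity
      linarith
  have hmono : Monotone (fun n : ℕ => Set.Ioi (t + 1/(n+1))) := by
    intro a b hab
    apply Ioi_subset_Ioi
    have : (1:ℝ)/(b+1) ≤ 1/(a+1) := by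
      apply one_div_le_one_div_of_le (by positivity)
      exact_mod_cast by omega
    linarith
  nth_rewrite 1 [hunion]
  rw [hmono.directed_le.measure_iUnion]
  refine iSup_le fun n => key t (1/(n+1)) (by positivity)

lemma eq_of_stopLoss (μ ν : Measure ℝ) [IsProbabilityMeasure μ] [IsProbabilityMeasure ν]
    (hμ : Integrable id μ) (hν : Integrable id ν)
    (h : ∀ t, ∫ x, max (x - t) 0 ∂μ = ∫ x, max (x - t) 0 ∂ν) : μ = ν := by
  have htail : ∀ t, μ (Set.Ioi t) = ν (Set.Ioi t) := fun t =>
    le_antisymm (tail_eq_of_stopLoss μ ν hμ hν h t)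
      (tail_eq_of_stopLoss ν μ hν hμ (fun s => (h s).symm) t)
  refine Measure.ext_of_Iic μ ν fun a => ?_
  rw [← Set.compl_Ioi, measure_compl measurableSet_Ioi (measure_ne_top μ _),
    measure_compl measurableSet_Ioi (measure_ne_top ν _), htail, measure_univ, measure_univ]

end Aux

/-- Proposition 4.2(iv): (Λ𝐅)ᵢ ≺cx Fᵢ for all i iff Λ𝐅 = 𝐅. -/
theorem stmt10 (n : ℕ) (Λ : Matrix (Fin n) (Fin n) ℝ) (hΛ : DoublyStochastic Λ)
    (F : Fin n → Measure ℝ) (hF : ∀ i, IsProbabilityMeasure (F i))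
    (hFint : ∀ i, Integrable id (F i)) :
    (∀ i, ConvexOrder (distMix Λ F i) (F i)) ↔ (∀ i, distMix Λ F i = F i) := by
  have := hF
  obtain ⟨hnn, hrow, hcol⟩ := hΛ
  have hprob : ∀ i, IsProbabilityMeasure (distMix Λ F i) := by
    intro i
    constructor
    simp only [distMix, Measure.finset_sum_apply, Measure.smul_apply, smul_eq_mul,
      measure_univ, mul_one]
    rw [← ENNReal.ofReal_sum_of_nonneg (fun j _ => hnn i j), hrow i, ENNReal.ofReal_one]
  have hint : ∀ (g : ℝ → ℝ), (∀ j, Integrable g (F j)) → ∀ i, Integrable g (distMix Λ F i) := by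
    intro g hg i
    rw [distMix]
    exact integrable_finset_sum_measure.mpr fun j _ => (hg j).smul_measure ENNReal.ofReal_ne_top
  have hintegral : ∀ (g : ℝ → ℝ), (∀ j, Integrable g (F j)) → ∀ i,
      ∫ x, g x ∂(distMix Λ F i) = ∑ j, Λ i j * ∫ x, g x ∂(F j) := by
    intro g hg i
    rw [distMix, integral_finset_sum_measure fun j _ =>
      (hg j).smul_measure ENNReal.ofReal_ne_top]
    refine Finset.sum_congr rfl fun j _ => ?_
    rw [integral_smul_measure, ENNReal.toReal_ofReal (hnn i j), smul_eq_mul]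
  constructor
  · intro h i
    haveI := hprob i
    have hidint : ∀ j, Integrable id (F j) := hFint
    refine eq_of_stopLoss _ _ (hint id hidint i) (hFint i) fun t => ?_
    have hgint : ∀ j, Integrable (fun x : ℝ => max (x - t) 0) (F j) :=
      fun j => stopLoss_integrable (hFint j) t
    set b : Fin n → ℝ := fun j => ∫ x, max (x - t) 0 ∂(F j) with hb
    have ha : ∀ k, ∫ x, max (x - t) 0 ∂(distMix Λ F k) = ∑ j, Λ k j * b j :=
      fun k => hintegral _ hgint k
    have hle : ∀ k, ∫ x, max (x - t) 0 ∂(distMix Λ F k) ≤ b k := fun k =>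
      h k _ (stopLoss_convex t) (hint _ hgint k) (hgint k)
    have hsum : ∑ k, ∫ x, max (x - t) 0 ∂(distMix Λ F k) = ∑ k, b k := by
      simp only [ha]
      rw [Finset.sum_comm]
      refine Finset.sum_congr rfl fun j _ => ?_
      rw [← Finset.sum_mul, hcol j, one_mul]
    exact (Finset.sum_eq_sum_iff_of_le fun k _ => hle k).mp hsum i (Finset.mem_univ i)
  · intro h i
    rw [h i]
    intro φ _ _ _
    exact le_rfl


end
end

section
/- Let ρ be a monotone risk measure defined on all Borel probability measures on ℝ, let α ∈ (0,1], let 𝛉 = (θ₁,…,θₙ) ∈ (0,∞)ⁿ, and let Λ be an n×n doubly stochastic matrix. Then ρ̄(𝐏_{α,𝛉}) ≤ ρ̄(Λ𝐏_{α,𝛉}) ≤ ρ̄(𝐏_{α,Λ𝛉}). -/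
open MeasureTheory
open scoped ENNReal BigOperators

noncomputable section

lemma measure_map_finset_sum {α β : Type*} {ι : Type*} [MeasurableSpace α] [MeasurableSpace β] {f : α → β}
    (hf : Measurable f) (s : Finset ι) (μ : ι → Measure α) :
    (∑ k ∈ s, μ k).map f = ∑ k ∈ s, (μ k).map f := by
  classical
  induction s using Finset.induction with
  | empty => simp
  | insert _ _ h ih => rw [Finset.sum_insert h, Finset.sum_insert h, Measure.map_add _ _ hf, ih]

lemma aggSet_subset_distMix {n : ℕ} (F : Fin n → Measure ℝ)
    (Λ : Matrix (Fin n) (Fin n) ℝ) (hΛ : DoublyStochastic Λ) :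
    aggSet n F ⊆ aggSet n (distMix Λ F) := by
  classical
  have hmem : Λ ∈ doublyStochastic ℝ (Fin n) := by
    rw [mem_doublyStochastic_iff_sum]; exact ⟨hΛ.1, hΛ.2.1, hΛ.2.2⟩
  obtain ⟨w, hw0, hw1, hwΛ⟩ := exists_eq_sum_perm_of_mem_doublyStochastic hmem
  rintro H ⟨μ, hμp, hμm, rfl⟩
  set μ' : Measure (Fin n → ℝ) := ∑ σ : Equiv.Perm (Fin n),
    ENNReal.ofReal (w σ) • μ.map (fun x => x ∘ σ) with hμ'def
  have hperm : ∀ σ : Equiv.Perm (Fin n), Measurable (fun x : Fin n → ℝ => x ∘ σ) :=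
    fun σ => measurable_pi_lambda _ fun i => measurable_pi_apply _
  have hsum : Measurable (fun x : Fin n → ℝ => ∑ i, x i) :=
    Finset.measurable_sum _ fun i _ => measurable_pi_apply _
  have hofsum : (∑ σ : Equiv.Perm (Fin n), ENNReal.ofReal (w σ)) = 1 := by
    rw [← ENNReal.ofReal_sum_of_nonneg (fun σ _ => hw0 σ), hw1, ENNReal.ofReal_one]
  refine ⟨μ', ?_, ?_, ?_⟩
  · constructor
    rw [hμ'def]
    simp only [Measure.coe_finset_sum, Finset.sum_apply, Measure.smul_apply, smul_eq_mul]
    have : ∀ σ : Equiv.Perm (Fin n), (μ.map (fun x => x ∘ σ)) Set.univ = 1 := by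
      intro σ
      rw [Measure.map_apply (hperm σ) MeasurableSet.univ]
      simp [hμp.measure_univ]
    simp only [this, mul_one, hofsum]
  · intro i
    rw [hμ'def, measure_map_finset_sum (measurable_pi_apply i)]
    have hmarg : ∀ σ : Equiv.Perm (Fin n),
        (μ.map (fun x => x ∘ σ)).map (fun x => x i) = F (σ i) := by
      intro σ
      rw [Measure.map_map (measurable_pi_apply i) (hperm σ)]
      exact hμm (σ i)
    simp only [Measure.map_smul, hmarg]
    -- show distMix Λ F i = ∑ σ, ofReal (w σ) • F (σ i)
    have hΛij : ∀ j, Λ i j = ∑ σ : Equiv.Perm (Fin n), if σ i = j then w σ else 0 := by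
      intro j
      rw [← hwΛ]
      simp only [Matrix.sum_apply, Matrix.smul_apply, Equiv.Perm.permMatrix,
        PEquiv.toMatrix_apply, Equiv.toPEquiv_apply, Option.mem_def, Option.some.injEq,
        smul_eq_mul]
      exact Finset.sum_congr rfl fun σ _ => by split <;> simp
    rw [distMix]
    have : ∀ j, ENNReal.ofReal (Λ i j)
        = ∑ σ : Equiv.Perm (Fin n), if σ i = j then ENNReal.ofReal (w σ) else 0 := by
      intro j
      rw [hΛij j, ENNReal.ofReal_sum_of_nonneg (fun σ _ => by split <;> simp [hw0])]
      exact Finset.sum_congr rfl fun σ _ => by split <;> simp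
    simp only [this, Finset.sum_smul, ite_smul, zero_smul]
    rw [Finset.sum_comm]
    refine Finset.sum_congr rfl fun σ _ => ?_
    rw [Finset.sum_ite_eq Finset.univ (σ i) (fun j => ENNReal.ofReal (w σ) • F j)]
    simp
  · rw [hμ'def, measure_map_finset_sum hsum]
    have : ∀ σ : Equiv.Perm (Fin n),
        (μ.map (fun x => x ∘ σ)).map (fun x => ∑ i, x i) = μ.map (fun x => ∑ i, x i) := by
      intro σ
      rw [Measure.map_map hsum (hperm σ)]
      congr 1
      funext x
      exact Equiv.sum_comp σ x
    simp only [Measure.map_smul, this, ← Finset.sum_smul, hofsum, one_smul]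
lemma pareto_Iic_of_lt {α θ x : ℝ} (h : x < θ) : pareto α θ (Set.Iic x) = 0 := by
  rw [pareto, withDensity_apply _ measurableSet_Iic]
  rw [setLIntegral_congr_fun measurableSet_Iic
    ((fun t (ht : t ≤ x) => by
      rw [if_neg (by linarith : ¬ θ ≤ t)] : ∀ t ∈ Set.Iic x,
        (if θ ≤ t then ENNReal.ofReal (α * θ ^ α / t ^ (α + 1)) else 0) = (fun _ => 0) t))]
  simp

lemma pareto_Iic_of_le {α θ x : ℝ} (hα : 0 < α) (hθ : 0 < θ) (hx : θ ≤ x) :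
    pareto α θ (Set.Iic x) = ENNReal.ofReal (1 - (θ / x) ^ α) := by
  have hx0 : 0 < x := lt_of_lt_of_le hθ hx
  rw [pareto, withDensity_apply _ measurableSet_Iic]
  have hind : ∀ t : ℝ, (if θ ≤ t then ENNReal.ofReal (α * θ ^ α / t ^ (α + 1)) else 0)
      = Set.indicator (Set.Ici θ) (fun t => ENNReal.ofReal (α * θ ^ α / t ^ (α + 1))) t := by
    intro t; rw [Set.indicator_apply]; rfl
  simp only [hind]
  rw [lintegral_indicator measurableSet_Ici, Measure.restrict_restrict measurableSet_Ici,
    Set.Ici_inter_Iic]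
  have hcont : ContinuousOn (fun t : ℝ => α * θ ^ α / t ^ (α + 1)) (Set.Icc θ x) := by
    apply ContinuousOn.div continuousOn_const
    · intro t ht
      exact (Real.continuousAt_rpow_const t (α+1) (Or.inl (by nlinarith [ht.1] : t ≠ 0))).continuousWithinAt
    · intro t ht
      exact ne_of_gt (Real.rpow_pos_of_pos (lt_of_lt_of_le hθ ht.1) _)
  have hint : IntegrableOn (fun t : ℝ => α * θ ^ α / t ^ (α + 1)) (Set.Icc θ x) :=
    hcont.integrableOn_Icc
  rw [← ofReal_integral_eq_lintegral_ofReal hint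
    (MeasureTheory.ae_restrict_of_forall_mem measurableSet_Icc
      (fun t ht => by
        have : 0 < t := lt_of_lt_of_le hθ ht.1
        positivity))]
  congr 1
  rw [MeasureTheory.integral_Icc_eq_integral_Ioc, ← intervalIntegral.integral_of_le hx]
  have heq : Set.EqOn (fun t : ℝ => α * θ ^ α / t ^ (α + 1))
      (fun t : ℝ => (α * θ ^ α) * t ^ (-(α + 1))) (Set.uIcc θ x) := by
    intro t ht
    rw [Set.uIcc_of_le hx] at ht
    have ht0 : 0 < t := lt_of_lt_of_le hθ ht.1
    simp only
    rw [Real.rpow_neg ht0.le, div_eq_mul_inv]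
  rw [intervalIntegral.integral_congr heq, intervalIntegral.integral_const_mul,
    integral_rpow (Or.inr ⟨by intro h; apply absurd (neg_injective h); simp [ne_of_gt hα],
      by rw [Set.uIcc_of_le hx]; rintro ⟨h0, -⟩; linarith⟩)]
  have hαne : α ≠ 0 := ne_of_gt hα
  have h1 : -(α + 1) + 1 = -α := by ring
  rw [h1]
  rw [Real.div_rpow hθ.le hx0.le, Real.rpow_neg hx0.le, Real.rpow_neg hθ.le]
  have hθα : (0:ℝ) < θ ^ α := Real.rpow_pos_of_pos hθ _
  have hxα : (0:ℝ) < x ^ α := Real.rpow_pos_of_pos hx0 _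
  field_simp
  ring

lemma pareto_prob {α θ : ℝ} (hα : 0 < α) (hθ : 0 < θ) : IsProbabilityMeasure (pareto α θ) := by
  constructor
  have h1 := tendsto_measure_Iic_atTop (μ := pareto α θ)
  have h2 : Filter.Tendsto (fun x => pareto α θ (Set.Iic x)) Filter.atTop (nhds 1) := by
    have hev : (fun x => ENNReal.ofReal (1 - (θ / x) ^ α)) =ᶠ[Filter.atTop]
        (fun x => pareto α θ (Set.Iic x)) := by
      filter_upwards [Filter.eventually_ge_atTop θ] with x hx
      rw [pareto_Iic_of_le hα hθ hx]
    apply Filter.Tendsto.congr' hev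
    have hdiv : Filter.Tendsto (fun x : ℝ => θ / x) Filter.atTop (nhds 0) :=
      tendsto_const_nhds.div_atTop Filter.tendsto_id
    have hrpow : Filter.Tendsto (fun x : ℝ => (θ / x) ^ α) Filter.atTop (nhds 0) := by
      have hc := (Real.continuousAt_rpow_const 0 α (Or.inr hα.le)).tendsto
      rw [Real.zero_rpow (ne_of_gt hα)] at hc
      exact hc.comp hdiv
    have : Filter.Tendsto (fun x : ℝ => 1 - (θ / x) ^ α) Filter.atTop (nhds 1) := by
      simpa using tendsto_const_nhds.sub hrpow
    have := (ENNReal.continuous_ofReal.tendsto 1).comp this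
    simpa [Function.comp_def] using this
  exact tendsto_nhds_unique h1 h2

lemma worstCase_le_of_maps {n : ℕ} (ρ : Measure ℝ → ℝ) (hρ : MonotoneRisk ρ)
    (F G : Fin n → Measure ℝ) (T : Fin n → ℝ → ℝ)
    (hTm : ∀ i, Measurable (T i)) (hTge : ∀ i x, x ≤ T i x)
    (hmap : ∀ i, (F i).map (T i) = G i) :
    worstCase ρ n F ≤ worstCase ρ n G := by
  apply sSup_le_sSup_of_isCofinalFor
  rintro v ⟨H, ⟨μ, hμp, hμm, rfl⟩, rfl⟩
  set Tmap : (Fin n → ℝ) → (Fin n → ℝ) := fun x i => T i (x i) with hTmapdef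
  have hTmapm : Measurable Tmap :=
    measurable_pi_lambda _ fun i => (hTm i).comp (measurable_pi_apply i)
  have hsum : Measurable (fun x : Fin n → ℝ => ∑ i, x i) :=
    Finset.measurable_sum _ fun i _ => measurable_pi_apply _
  set H' : Measure ℝ := (μ.map Tmap).map (fun x => ∑ i, x i) with hH'def
  have hμ'p : IsProbabilityMeasure (μ.map Tmap) := Measure.isProbabilityMeasure_map hTmapm.aemeasurable
  have hH'mem : H' ∈ aggSet n G := by
    refine ⟨μ.map Tmap, hμ'p, fun i => ?_, rfl⟩
    rw [Measure.map_map (measurable_pi_apply i) hTmapm]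
    have : ((fun x : Fin n → ℝ => x i) ∘ Tmap) = (T i) ∘ (fun x : Fin n → ℝ => x i) := rfl
    rw [this, ← Measure.map_map (hTm i) (measurable_pi_apply i), hμm i, hmap i]
  refine ⟨_, ⟨H', hH'mem, rfl⟩, ?_⟩
  have hHp : IsProbabilityMeasure (μ.map (fun x : Fin n → ℝ => ∑ i, x i)) :=
    Measure.isProbabilityMeasure_map hsum.aemeasurable
  have hH'p : IsProbabilityMeasure H' := Measure.isProbabilityMeasure_map hsum.aemeasurable
  have hst : StOrder (μ.map (fun x : Fin n → ℝ => ∑ i, x i)) H' := by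
    intro t
    rw [hH'def, Measure.map_map hsum hTmapm,
      Measure.map_apply (hsum.comp hTmapm) measurableSet_Iic,
      Measure.map_apply hsum measurableSet_Iic]
    apply measure_mono
    intro x hx
    simp only [Set.mem_preimage, Set.mem_Iic, Function.comp_apply] at *
    calc ∑ i, x i ≤ ∑ i, T i (x i) := Finset.sum_le_sum fun i _ => hTge i (x i)
    _ ≤ t := hx
  exact EReal.coe_le_coe_iff.mpr (hρ _ _ hHp hH'p hst)

lemma exists_transfer {n : ℕ} {α : ℝ} (hα : α ∈ Set.Ioc (0:ℝ) 1) (w : Fin n → ℝ)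
    (hw0 : ∀ j, 0 ≤ w j) (hw1 : ∑ j, w j = 1) (θ : Fin n → ℝ) (hθ : ∀ j, 0 < θ j) :
    ∃ T : ℝ → ℝ, Measurable T ∧ (∀ x, x ≤ T x) ∧
      (∑ j, ENNReal.ofReal (w j) • pareto α (θ j)).map T = pareto α (∑ j, w j * θ j) := by
  classical
  obtain ⟨hα0, hα1⟩ := hα
  have hαne : α ≠ 0 := ne_of_gt hα0
  set A : Finset (Fin n) := Finset.univ.filter (fun j => 0 < w j) with hAdef
  have hwA : ∀ j, j ∉ A → w j = 0 := by
    intro j hj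
    simp only [hAdef, Finset.mem_filter, Finset.mem_univ, true_and, not_lt] at hj
    exact le_antisymm hj (hw0 j)
  have hA : A.Nonempty := by
    by_contra h
    rw [Finset.not_nonempty_iff_eq_empty] at h
    have : ∑ j, w j = 0 := Finset.sum_eq_zero fun j _ => hwA j (by simp [h])
    rw [hw1] at this; norm_num at this
  set a : ℝ := A.inf' hA θ with hadef
  obtain ⟨j₀, hj₀A, hj₀⟩ : ∃ j₀ ∈ A, a = θ j₀ := Finset.exists_mem_eq_inf' hA θ
  have hwj₀ : 0 < w j₀ := (Finset.mem_filter.mp hj₀A).2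
  have ha_pos : 0 < a := hj₀ ▸ hθ j₀
  have hle : ∀ j ∈ A, a ≤ θ j := fun j hj => Finset.inf'_le θ hj
  set θb : ℝ := ∑ j, w j * θ j with hθbdef
  have hw1A : ∑ j ∈ A, w j = 1 := by
    rw [← hw1]
    exact Finset.sum_subset (Finset.subset_univ A) (fun j _ hj => hwA j hj)
  have hθbA : θb = ∑ j ∈ A, w j * θ j := by
    rw [hθbdef]
    exact (Finset.sum_subset (Finset.subset_univ A) (fun j _ hj => by rw [hwA j hj, zero_mul])).symm
  have hθb_ge_a : a ≤ θb := by
    calc a = ∑ j ∈ A, w j * a := by rw [← Finset.sum_mul, hw1A, one_mul]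
    _ ≤ ∑ j ∈ A, w j * θ j := Finset.sum_le_sum fun j hj =>
        mul_le_mul_of_nonneg_left (hle j hj) (hw0 j)
    _ = θb := hθbA.symm
  have hθb_pos : 0 < θb := lt_of_lt_of_le ha_pos hθb_ge_a
  set Sf : ℝ → ℝ := fun x => ∑ j, w j * min 1 ((θ j / max a x) ^ α) with hSfdef
  have hmax_pos : ∀ x : ℝ, 0 < max a x := fun x => lt_of_lt_of_le ha_pos (le_max_left _ _)
  have hSf_le_one : ∀ x, Sf x ≤ 1 := by
    intro x
    calc Sf x ≤ ∑ j, w j := Finset.sum_le_sum fun j _ => by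
          simpa using mul_le_mul_of_nonneg_left (min_le_left 1 ((θ j / max a x) ^ α)) (hw0 j)
    _ = 1 := hw1
  have hSf_pos : ∀ x, 0 < Sf x := by
    intro x
    apply Finset.sum_pos'
    · intro j _
      have : (0:ℝ) ≤ min 1 ((θ j / max a x) ^ α) :=
        le_min zero_le_one (Real.rpow_nonneg (div_nonneg (hθ j).le (hmax_pos x).le) α)
      exact mul_nonneg (hw0 j) this
    · refine ⟨j₀, Finset.mem_univ j₀, ?_⟩
      have h1 : (0:ℝ) < (θ j₀ / max a x) ^ α :=
        Real.rpow_pos_of_pos (div_pos (hθ j₀) (hmax_pos x)) α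
      exact mul_pos hwj₀ (lt_min one_pos h1)
  have hSf_a : Sf a = 1 := by
    have key : ∀ j, w j * min 1 ((θ j / max a a) ^ α) = w j := by
      intro j
      rcases (hw0 j).eq_or_lt with h | h
      · rw [← h, zero_mul]
      · have hjA : j ∈ A := by simp [hAdef, h]
        have h1 : (1:ℝ) ≤ (θ j / max a a) ^ α := by
          rw [max_self]
          exact Real.one_le_rpow ((one_le_div ha_pos).mpr (hle j hjA)) hα0.le
        rw [min_eq_left h1, mul_one]
    rw [hSfdef]
    simp only [key]
    exact hw1
  have hterm_anti : ∀ j, ∀ x y : ℝ, a ≤ x → x ≤ y →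
      min 1 ((θ j / max a y) ^ α) ≤ min 1 ((θ j / max a x) ^ α) := by
    intro j x y hax hxy
    apply min_le_min le_rfl
    apply Real.rpow_le_rpow (div_nonneg (hθ j).le (hmax_pos y).le)
      (div_le_div_of_nonneg_left (hθ j).le (hmax_pos x) (max_le_max le_rfl hxy)) hα0.le
  have hSf_anti : ∀ x y : ℝ, a ≤ x → x < y → Sf y < Sf x := by
    intro x y hax hxy
    apply Finset.sum_lt_sum
    · intro j _
      exact mul_le_mul_of_nonneg_left (hterm_anti j x y hax hxy.le) (hw0 j)
    · refine ⟨j₀, Finset.mem_univ j₀, ?_⟩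
      apply mul_lt_mul_of_pos_left _ hwj₀
      have hmx : max a x = x := max_eq_right hax
      have hmy : max a y = y := max_eq_right (hax.trans hxy.le)
      rw [hmx, hmy, ← hj₀]
      have hx0 : 0 < x := lt_of_lt_of_le ha_pos hax
      have hy0 : 0 < y := hx0.trans hxy
      have h1 : (a / x) ^ α ≤ 1 :=
        Real.rpow_le_one (div_nonneg ha_pos.le hx0.le) ((div_le_one hx0).mpr hax) hα0.le
      have h2 : (a / y) ^ α ≤ 1 :=
        Real.rpow_le_one (div_nonneg ha_pos.le hy0.le) ((div_le_one hy0).mpr (hax.trans hxy.le)) hα0.le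
      rw [min_eq_right h1, min_eq_right h2]
      exact Real.rpow_lt_rpow (div_nonneg ha_pos.le hy0.le)
        (div_lt_div_of_pos_left ha_pos hx0 hxy) hα0
  have hSf_ub : ∀ x : ℝ, a ≤ x → Sf x ≤ (θb / x) ^ α := by
    intro x hax
    have hx0 : 0 < x := lt_of_lt_of_le ha_pos hax
    have hmx : max a x = x := max_eq_right hax
    have step1 : Sf x ≤ ∑ j, w j * (θ j / x) ^ α := by
      rw [hSfdef]
      refine Finset.sum_le_sum fun j _ => ?_
      rw [hmx]
      exact mul_le_mul_of_nonneg_left (min_le_right _ _) (hw0 j)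
    have step2 : ∑ j, w j * (θ j / x) ^ α ≤ (θb / x) ^ α := by
      have hp : (1:ℝ) ≤ α⁻¹ := by nlinarith [mul_inv_cancel₀ hαne, inv_pos.mpr hα0]
      have key := Real.arith_mean_le_rpow_mean Finset.univ w (fun j => (θ j / x) ^ α)
        (fun j _ => hw0 j) hw1 (fun j _ => Real.rpow_nonneg (div_nonneg (hθ j).le hx0.le) α)
        (p := α⁻¹) hp
      have hz : ∀ j : Fin n, ((θ j / x) ^ α) ^ (α⁻¹:ℝ) = θ j / x := fun j => by
        rw [← Real.rpow_mul (div_nonneg (hθ j).le hx0.le), mul_inv_cancel₀ hαne, Real.rpow_one]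
      rw [show (1:ℝ)/α⁻¹ = α by rw [one_div, inv_inv]] at key
      calc ∑ j, w j * (θ j / x) ^ α ≤ (∑ j, w j * (((θ j / x)^α) ^ (α⁻¹:ℝ))) ^ α := key
      _ = (θb / x) ^ α := by
          congr 1
          simp only [hz]
          rw [hθbdef, Finset.sum_div]
          exact Finset.sum_congr rfl fun j _ => (mul_div_assoc _ _ _).symm
    exact step1.trans step2
  set g : ℝ → ℝ := fun x => θb * Sf x ^ (-α⁻¹ : ℝ) with hgdef
  set T : ℝ → ℝ := fun x => if x ≤ a then x - a + θb else g x with hTdef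
  have hga : g a = θb := by simp only [hgdef]; simp only [hSf_a, Real.one_rpow, mul_one]
  have hT_eq_g : ∀ x, a ≤ x → T x = g x := by
    intro x hax
    simp only [hTdef]
    rcases eq_or_lt_of_le hax with h | h
    · rw [← h, if_pos le_rfl, hga]; ring
    · rw [if_neg (not_le.mpr h)]
  have hT_ge : ∀ x, x ≤ T x := by
    intro x
    rcases le_or_gt x a with hxa | hxa
    · simp only [hTdef]; rw [if_pos hxa]; linarith
    · rw [hT_eq_g x hxa.le]; simp only [hgdef]
      have hx0 : 0 < x := ha_pos.trans hxa
      have h1 : ((θb / x) ^ α : ℝ) ^ (-α⁻¹ : ℝ) ≤ Sf x ^ (-α⁻¹ : ℝ) :=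
        Real.rpow_le_rpow_of_nonpos (hSf_pos x) (hSf_ub x hxa.le)
          (by rw [neg_nonpos]; positivity)
      have h2 : ((θb / x) ^ α : ℝ) ^ (-α⁻¹ : ℝ) = x / θb := by
        rw [← Real.rpow_mul (div_nonneg hθb_pos.le hx0.le)]
        rw [show α * -α⁻¹ = -1 by field_simp]
        rw [Real.rpow_neg_one, inv_div]
      calc x = θb * (x / θb) := by field_simp
      _ ≤ θb * Sf x ^ (-α⁻¹ : ℝ) := by
          apply mul_le_mul_of_nonneg_left _ hθb_pos.le
          rw [← h2]; exact h1
  have hg_gt : ∀ x, a < x → θb < g x := by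
    intro x hax
    simp only [hgdef]
    have h1 : Sf x < 1 := hSf_a ▸ hSf_anti a x le_rfl hax
    have h2 : (1:ℝ) < Sf x ^ (-α⁻¹ : ℝ) := by
      rw [Real.one_lt_rpow_iff_of_pos (hSf_pos x)]
      right
      exact ⟨h1, by rw [neg_lt, neg_zero]; positivity⟩
    nlinarith
  have hT_mono : StrictMono T := by
    intro x y hxy
    rcases le_or_gt y a with hya | hya
    · simp only [hTdef]; simp only [if_pos hya, if_pos (hxy.le.trans hya)]; linarith
    · rcases le_or_gt x a with hxa | hxa
      · simp only [hTdef]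
        simp only [if_pos hxa, if_neg (not_le.mpr hya)]
        have := hg_gt y hya
        linarith
      · rw [hT_eq_g x hxa.le, hT_eq_g y hya.le, hgdef]
        apply mul_lt_mul_of_pos_left _ hθb_pos
        exact Real.rpow_lt_rpow_of_neg (hSf_pos y) (hSf_anti x y hxa.le hxy)
          (by rw [neg_lt, neg_zero]; positivity)
  have hT_meas : Measurable T := hT_mono.monotone.measurable
  have hSf_cont : Continuous Sf := by
    simp only [hSfdef]
    apply continuous_finset_sum
    intro j _
    apply Continuous.mul continuous_const
    apply Continuous.min continuous_const
    apply Continuous.rpow_const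
    · exact continuous_const.div (continuous_const.max continuous_id)
        (fun x => ne_of_gt (hmax_pos x))
    · intro x; exact Or.inl (ne_of_gt (div_pos (hθ j) (hmax_pos x)))
  have hg_cont : Continuous g := by
    simp only [hgdef]
    apply Continuous.mul continuous_const
    apply Continuous.rpow_const hSf_cont
    intro x; exact Or.inl (ne_of_gt (hSf_pos x))
  have hT_surj : ∀ y : ℝ, ∃ x, T x = y := by
    intro y
    rcases le_or_gt y θb with hy | hy
    · refine ⟨y - θb + a, ?_⟩
      simp only [hTdef]; rw [if_pos (by linarith)]
      ring
    · set M : ℝ := max y (a + 1) with hMdef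
      have haM : a ≤ M := by
        calc a ≤ a + 1 := by linarith
        _ ≤ M := le_max_right _ _
      have h1 : g a ≤ y := by rw [hga]; exact hy.le
      have h2 : y ≤ g M := by
        calc y ≤ M := le_max_left _ _
        _ ≤ T M := hT_ge M
        _ = g M := hT_eq_g M haM
      obtain ⟨x, hx, hgx⟩ := intermediate_value_Icc haM hg_cont.continuousOn ⟨h1, h2⟩
      exact ⟨x, by rw [hT_eq_g x hx.1, hgx]⟩
  refine ⟨T, hT_meas, hT_ge, ?_⟩
  set Fmix : Measure ℝ := ∑ j, ENNReal.ofReal (w j) • pareto α (θ j) with hFdef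
  have hpar : ∀ j, IsProbabilityMeasure (pareto α (θ j)) := fun j => pareto_prob hα0 (hθ j)
  have hFprob : IsProbabilityMeasure Fmix := by
    constructor
    rw [hFdef]
    simp only [Measure.coe_finset_sum, Finset.sum_apply, Measure.smul_apply, smul_eq_mul]
    have huniv : ∀ j : Fin n, pareto α (θ j) Set.univ = 1 := fun j => (hpar j).measure_univ
    simp only [huniv, mul_one]
    rw [← ENNReal.ofReal_sum_of_nonneg (fun j _ => hw0 j), hw1, ENNReal.ofReal_one]
  have hmapped : IsProbabilityMeasure (Fmix.map T) :=
    Measure.isProbabilityMeasure_map hT_meas.aemeasurable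
  refine Measure.ext_of_Iic (Fmix.map T) _ (fun y => ?_)
  rw [Measure.map_apply hT_meas measurableSet_Iic]
  obtain ⟨x₀, hx₀⟩ := hT_surj y
  have hpre : T ⁻¹' Set.Iic y = Set.Iic x₀ := by
    ext x
    simp only [Set.mem_preimage, Set.mem_Iic, ← hx₀]
    exact ⟨fun h => (hT_mono.le_iff_le).mp h, fun h => hT_mono.monotone h⟩
  rw [hpre]
  have hTa : T a = θb := by rw [hT_eq_g a le_rfl, hga]
  rcases lt_or_ge y θb with hy | hy
  · have hx₀a : x₀ < a := by
      by_contra h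
      push_neg at h
      have h2 := hT_mono.monotone h
      rw [hTa, hx₀] at h2; linarith
    have hz : ∀ j : Fin n, (ENNReal.ofReal (w j)) * pareto α (θ j) (Set.Iic x₀) = 0 := by
      intro j
      rcases (hw0 j).eq_or_lt with h | h
      · rw [← h]; simp
      · have hjA : j ∈ A := by simp [hAdef, h]
        rw [pareto_Iic_of_lt (lt_of_lt_of_le hx₀a (hle j hjA)), mul_zero]
    rw [hFdef]
    simp only [Measure.coe_finset_sum, Finset.sum_apply, Measure.smul_apply, smul_eq_mul]
    rw [Finset.sum_eq_zero (fun j _ => hz j), pareto_Iic_of_lt hy]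
  · have hax₀ : a ≤ x₀ := by
      by_contra h
      push_neg at h
      have h2 := hT_mono h
      rw [hTa, hx₀] at h2; linarith
    have hx₀0 : 0 < x₀ := lt_of_lt_of_le ha_pos hax₀
    have hy0 : 0 < y := lt_of_lt_of_le hθb_pos hy
    have hgx₀ : g x₀ = y := by rw [← hT_eq_g x₀ hax₀, hx₀]
    have hSfx₀ : Sf x₀ = (θb / y) ^ α := by
      simp only [hgdef] at hgx₀
      have h1 : Sf x₀ ^ (-α⁻¹ : ℝ) = y / θb := by
        rw [eq_div_iff hθb_pos.ne']; linarith
      have h2 := congrArg (fun t : ℝ => t ^ (-α : ℝ)) h1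
      rw [← Real.rpow_mul (hSf_pos x₀).le, show (-α⁻¹) * (-α) = 1 by field_simp,
        Real.rpow_one] at h2
      rw [h2, Real.rpow_neg (div_nonneg hy0.le hθb_pos.le),
        ← Real.inv_rpow (div_nonneg hy0.le hθb_pos.le), inv_div]
    have hterm : ∀ j : Fin n, (ENNReal.ofReal (w j)) * pareto α (θ j) (Set.Iic x₀)
        = ENNReal.ofReal (w j * (1 - min 1 ((θ j / max a x₀) ^ α))) := by
      intro j
      rw [max_eq_right hax₀]
      rcases lt_or_ge x₀ (θ j) with h | h
      · rw [pareto_Iic_of_lt h, mul_zero]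
        have h1 : (1:ℝ) ≤ (θ j / x₀) ^ α :=
          Real.one_le_rpow ((one_le_div hx₀0).mpr h.le) hα0.le
        rw [min_eq_left h1]
        simp
      · rw [pareto_Iic_of_le hα0 (hθ j) h]
        have h1 : (θ j / x₀) ^ α ≤ 1 :=
          Real.rpow_le_one (div_nonneg (hθ j).le hx₀0.le) ((div_le_one hx₀0).mpr h) hα0.le
        rw [min_eq_right h1, ← ENNReal.ofReal_mul (hw0 j)]
    rw [hFdef]
    simp only [Measure.coe_finset_sum, Finset.sum_apply, Measure.smul_apply, smul_eq_mul]
    rw [Finset.sum_congr rfl (fun j _ => hterm j),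
      ← ENNReal.ofReal_sum_of_nonneg (fun j _ => mul_nonneg (hw0 j)
        (sub_nonneg.mpr (min_le_left _ _))),
      pareto_Iic_of_le hα0 hθb_pos hy]
    congr 1
    have hsum : ∑ j, w j * (1 - min 1 ((θ j / max a x₀) ^ α)) = 1 - Sf x₀ := by
      simp only [mul_sub, mul_one]
      rw [Finset.sum_sub_distrib, hw1]
    rw [hsum, hSfx₀]

/-- Theorem 5.1: for infinite-mean Pareto risks,
    ρ̄(𝐏_{α,θ}) ≤ ρ̄(Λ𝐏_{α,θ}) ≤ ρ̄(𝐏_{α,Λθ}). -/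
theorem stmt15 (n : ℕ) (ρ : Measure ℝ → ℝ) (hρ : MonotoneRisk ρ)
    (α : ℝ) (hα : α ∈ Set.Ioc (0 : ℝ) 1)
    (θ : Fin n → ℝ) (hθ : ∀ i, 0 < θ i)
    (Λ : Matrix (Fin n) (Fin n) ℝ) (hΛ : DoublyStochastic Λ) :
    worstCase ρ n (fun i => pareto α (θ i)) ≤
        worstCase ρ n (distMix Λ (fun i => pareto α (θ i))) ∧
      worstCase ρ n (distMix Λ (fun i => pareto α (θ i))) ≤
        worstCase ρ n (fun i => pareto α (∑ j, Λ i j * θ j)) := by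
  constructor
  · exact sSup_le_sSup (Set.image_mono (aggSet_subset_distMix _ _ hΛ))
  · have hT : ∀ i : Fin n, ∃ T : ℝ → ℝ, Measurable T ∧ (∀ x, x ≤ T x) ∧
        (∑ j, ENNReal.ofReal (Λ i j) • pareto α (θ j)).map T
          = pareto α (∑ j, Λ i j * θ j) :=
      fun i => exists_transfer hα (Λ i) (fun j => hΛ.1 i j) (hΛ.2.1 i) θ hθ
    choose T hTm hTge hTmap using hT
    apply worstCase_le_of_maps ρ hρ _ _ T hTm hTge
    intro i
    have hd : distMix Λ (fun i => pareto α (θ i)) i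
        = ∑ j, ENNReal.ofReal (Λ i j) • pareto α (θ j) := rfl
    rw [hd, hTmap i]

end
end
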